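/- arXiv:1311.4452 — 2 statements merged into one kernel-verified Lean document; each statement's English description precedes it below -/
import Mathlib

section
/- Let Ω ⊂ ℝⁿ be a bounded measurable set, C > 0, and let φ₁, …, φ_N be an orthonormal system in L²(ℝⁿ) with supp(φ_j) ⊆ Ω and |φ_j(x)|² ≤ C a.e. for all j. Then for every nonnegative measurable f on ℝⁿ × ℝⁿ, ∑_{j=1}^N ∫∫ f(x,k)|φ_j(x)|²|φ̂_j(k)|² dx dk ≤ C |Ω| (2π)⁻ⁿ ∫_{Ω×ℝⁿ} f(x,k) dx dk. -/
open MeasureTheory Real Set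

/-- The Fourier transform with convention `(2π)^{-n/2} ∫ φ(x) e^{-i⟨k,x⟩} dx`. -/
noncomputable def ft (n : ℕ) (φ : (Fin n → ℝ) → ℂ) (k : Fin n → ℝ) : ℂ :=
  ((2 * π : ℝ) ^ (-(n : ℝ) / 2) : ℝ) •
    ∫ x : Fin n → ℝ, φ x * Complex.exp (-Complex.I * ((∑ j, k j * x j : ℝ) : ℂ))

lemma bessel_aux (n N : ℕ) (Ω : Set (Fin n → ℝ)) (hΩm : MeasurableSet Ω)
    (hΩfin : volume Ω ≠ ⊤)
    (φ : Fin N → (Fin n → ℝ) → ℂ)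
    (hL2 : ∀ j, MemLp (φ j) 2 (volume : Measure (Fin n → ℝ)))
    (horth : ∀ i j, (∫ x : Fin n → ℝ, (starRingEnd ℂ) (φ i x) * φ j x)
        = if i = j then 1 else 0)
    (hsupp : ∀ j, Function.support (φ j) ⊆ Ω) (k : Fin n → ℝ) :
    ∑ j, ‖∫ x : Fin n → ℝ, φ j x * Complex.exp (-Complex.I * ((∑ i, k i * x i : ℝ) : ℂ))‖ ^ 2
      ≤ (volume Ω).toReal := by
  classical
  set ψ : Fin N → Lp ℂ 2 (volume : Measure (Fin n → ℝ)) := fun j => (hL2 j).toLp (φ j) with hψ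
  have hinner : ∀ i j, (inner ℂ (ψ i) (ψ j) : ℂ) = ∫ x, (starRingEnd ℂ) (φ i x) * φ j x := by
    intro i j
    rw [MeasureTheory.L2.inner_def]
    refine integral_congr_ae ?_
    filter_upwards [(hL2 i).coeFn_toLp, (hL2 j).coeFn_toLp] with x hi hj
    rw [RCLike.inner_apply, hi, hj, mul_comm]
  have horthon : Orthonormal ℂ ψ := by
    rw [orthonormal_iff_ite]
    intro i j
    rw [hinner, horth]
  -- the test function
  set g : (Fin n → ℝ) → ℂ :=
    Ω.indicator (fun x => Complex.exp (Complex.I * ((∑ i, k i * x i : ℝ) : ℂ))) with hg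
  have hgmeas : AEStronglyMeasurable g volume := by
    refine (Continuous.aestronglyMeasurable ?_).indicator hΩm
    exact Complex.continuous_exp.comp (by continuity)
  have hgnorm : ∀ x, ‖g x‖ = ‖Ω.indicator (fun _ => (1:ℝ)) x‖ := by
    intro x
    by_cases hx : x ∈ Ω
    · rw [hg, Set.indicator_of_mem hx, Set.indicator_of_mem hx, Complex.norm_exp]
      norm_num [Complex.mul_re]
    · simp [hg, hx]
  have hgL2 : MemLp g 2 (volume : Measure (Fin n → ℝ)) := by
    refine MemLp.mono (memLp_indicator_const 2 hΩm (1:ℝ) (Or.inr hΩfin)) hgmeas ?_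
    exact Filter.Eventually.of_forall fun x => (hgnorm x).le
  set G : Lp ℂ 2 (volume : Measure (Fin n → ℝ)) := hgL2.toLp g with hG
  have key : ∀ j, ‖∫ x : Fin n → ℝ, φ j x * Complex.exp (-Complex.I * ((∑ i, k i * x i : ℝ) : ℂ))‖
      = ‖(inner ℂ (ψ j) G : ℂ)‖ := by
    intro j
    have h1 : (inner ℂ (ψ j) G : ℂ) = ∫ x, (starRingEnd ℂ) (φ j x) * g x := by
      rw [MeasureTheory.L2.inner_def]
      refine integral_congr_ae ?_
      filter_upwards [(hL2 j).coeFn_toLp, hgL2.coeFn_toLp] with x hj hgx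
      rw [RCLike.inner_apply, hj, hgx, mul_comm]
    have h2 : ∀ x, (starRingEnd ℂ) (φ j x) * g x
        = (starRingEnd ℂ) (φ j x * Complex.exp (-Complex.I * ((∑ i, k i * x i : ℝ) : ℂ))) := by
      intro x
      by_cases hx : x ∈ Ω
      · simp only [hg, Set.indicator_of_mem hx, map_mul]
        congr 1
        rw [← Complex.exp_conj]
        congr 1
        simp [Complex.conj_ofReal]
      · have : φ j x = 0 := Function.notMem_support.mp (fun h => hx (hsupp j h))
        simp [this, hg, Set.indicator_of_notMem hx]
    have h3 : (∫ x, (starRingEnd ℂ) (φ j x) * g x)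
        = (starRingEnd ℂ) (∫ x : Fin n → ℝ, φ j x * Complex.exp (-Complex.I * ((∑ i, k i * x i : ℝ) : ℂ))) := by
      rw [← integral_conj]
      exact integral_congr_ae (Filter.Eventually.of_forall h2)
    rw [h1, h3, RCLike.norm_conj]
  have hGnorm : ‖G‖ ^ 2 = (volume Ω).toReal := by
    have h1 : RCLike.re (inner ℂ G G : ℂ) = ‖G‖ ^ 2 := inner_self_eq_norm_sq G
    have h2 : (inner ℂ G G : ℂ) = ∫ x, ((‖g x‖ ^ 2 : ℝ) : ℂ) := by
      rw [MeasureTheory.L2.inner_def]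
      refine integral_congr_ae ?_
      filter_upwards [hgL2.coeFn_toLp] with x hx
      rw [RCLike.inner_apply, hx, mul_comm, Complex.conj_mul']
      norm_cast
    have h3 : (∫ x, ((‖g x‖ ^ 2 : ℝ) : ℂ)) = ((∫ x, (‖g x‖ ^ 2 : ℝ) : ℝ) : ℂ) := integral_ofReal
    have h4 : (∫ x, (‖g x‖ ^ 2 : ℝ)) = (volume Ω).toReal := by
      have : ∀ x, (‖g x‖ ^ 2 : ℝ) = Ω.indicator (fun _ => (1:ℝ)) x := by
        intro x
        rw [hgnorm x]
        by_cases hx : x ∈ Ω <;> simp [hx]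
      rw [integral_congr_ae (Filter.Eventually.of_forall this), integral_indicator_const (1:ℝ) hΩm, smul_eq_mul, mul_one, measureReal_def]
    rw [← h1, h2, h3, h4]
    simp
  calc ∑ j, ‖∫ x : Fin n → ℝ, φ j x * Complex.exp (-Complex.I * ((∑ i, k i * x i : ℝ) : ℂ))‖ ^ 2
      = ∑ j, ‖(inner ℂ (ψ j) G : ℂ)‖ ^ 2 := by
        refine Finset.sum_congr rfl fun j _ => ?_; rw [key j]
    _ ≤ ‖G‖ ^ 2 := horthon.sum_inner_products_le G
    _ = (volume Ω).toReal := hGnorm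


lemma sum_lintegral_le {α : Type*} {ι : Type*} [MeasurableSpace α] (μ : Measure α)
    (s : Finset ι) (h : ι → α → ENNReal) :
    ∑ i ∈ s, ∫⁻ a, h i a ∂μ ≤ ∫⁻ a, ∑ i ∈ s, h i a ∂μ := by
  classical
  induction s using Finset.induction with
  | empty => simp
  | @insert x s hx ih =>
    rw [Finset.sum_insert hx]
    refine le_trans (add_le_add_right ih _) (le_trans (le_lintegral_add _ _)
      (lintegral_mono fun a => ?_))
    rw [Finset.sum_insert hx]

/-- for an orthonormal system `φ₁,…,φ_N` supported in a bounded set `Ω`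
with `|φ_j|² ≤ C` a.e., the phase-space measures satisfy the Berezin-type bound
`∑_j μ[φ_j](f) ≤ C |Ω| (2π)⁻ⁿ ∫_{Ω×ℝⁿ} f`. -/
theorem stmt_12 (n N : ℕ) (Ω : Set (Fin n → ℝ)) (hΩm : MeasurableSet Ω)
    (hΩb : Bornology.IsBounded Ω) (C : ℝ) (hC : 0 < C)
    (φ : Fin N → (Fin n → ℝ) → ℂ)
    (hL2 : ∀ j, MemLp (φ j) 2 (volume : Measure (Fin n → ℝ)))
    (horth : ∀ i j, (∫ x : Fin n → ℝ, (starRingEnd ℂ) (φ i x) * φ j x)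
        = if i = j then 1 else 0)
    (hsupp : ∀ j, Function.support (φ j) ⊆ Ω)
    (hbound : ∀ j, ∀ᵐ x ∂(volume : Measure (Fin n → ℝ)), ‖φ j x‖ ^ 2 ≤ C)
    (f : (Fin n → ℝ) × (Fin n → ℝ) → ℝ) (hf : Measurable f) (hf0 : ∀ p, 0 ≤ f p) :
    ∑ j, ∫⁻ p : (Fin n → ℝ) × (Fin n → ℝ),
        ENNReal.ofReal (f p) * ENNReal.ofReal (‖φ j p.1‖ ^ 2 * ‖ft n (φ j) p.2‖ ^ 2)
      ≤ ENNReal.ofReal C * volume Ω * ENNReal.ofReal ((2 * π) ^ (-(n : ℝ))) *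
        ∫⁻ p in Ω ×ˢ (Set.univ : Set (Fin n → ℝ)), ENNReal.ofReal (f p) := by
  classical
  have hΩfin : volume Ω ≠ ⊤ := hΩb.measure_lt_top.ne
  set c : ENNReal := ENNReal.ofReal C * volume Ω * ENNReal.ofReal ((2 * π) ^ (-(n : ℝ)))
    with hc
  -- a.e. bound in the product space
  have hae : ∀ᵐ p : (Fin n → ℝ) × (Fin n → ℝ) ∂volume, ∀ j, ‖φ j p.1‖ ^ 2 ≤ C := by
    rw [MeasureTheory.ae_all_iff]
    intro j
    rw [Measure.volume_eq_prod]
    exact Measure.quasiMeasurePreserving_fst.ae (hbound j)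
  -- norm squared of ft
  have hft : ∀ j k, ‖ft n (φ j) k‖ ^ 2 = (2 * π) ^ (-(n : ℝ)) *
      ‖∫ x : Fin n → ℝ, φ j x * Complex.exp (-Complex.I * ((∑ i, k i * x i : ℝ) : ℂ))‖ ^ 2 := by
    intro j k
    have hr : (0:ℝ) < (2 * π) ^ (-(n : ℝ) / 2) := by positivity
    have hr2 : ((2 * π : ℝ) ^ (-(n : ℝ) / 2)) ^ 2 = (2 * π) ^ (-(n : ℝ)) := by
      rw [← Real.rpow_natCast ((2 * π : ℝ) ^ (-(n : ℝ) / 2)) 2,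
        ← Real.rpow_mul (by positivity : (0:ℝ) ≤ 2 * π)]
      norm_num
    rw [ft, norm_smul, mul_pow, Real.norm_eq_abs, sq_abs, hr2]
  -- the bessel bound on sums of ft norms
  have hbessel : ∀ k, ∑ j, ‖ft n (φ j) k‖ ^ 2
      ≤ (2 * π) ^ (-(n : ℝ)) * (volume Ω).toReal := by
    intro k
    have h1 : ∑ j, ‖ft n (φ j) k‖ ^ 2 = (2 * π) ^ (-(n : ℝ)) *
        ∑ j, ‖∫ x : Fin n → ℝ, φ j x * Complex.exp (-Complex.I * ((∑ i, k i * x i : ℝ) : ℂ))‖ ^ 2 := by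
      rw [Finset.mul_sum]
      exact Finset.sum_congr rfl fun j _ => hft j k
    rw [h1]
    have hpos : (0:ℝ) ≤ (2 * π) ^ (-(n : ℝ)) := by positivity
    exact mul_le_mul_of_nonneg_left
      (bessel_aux n N Ω hΩm hΩfin φ hL2 horth hsupp k) hpos
  -- pointwise bound
  have hpt : ∀ p : (Fin n → ℝ) × (Fin n → ℝ), (∀ j, ‖φ j p.1‖ ^ 2 ≤ C) →
      ∑ j, ENNReal.ofReal (f p) * ENNReal.ofReal (‖φ j p.1‖ ^ 2 * ‖ft n (φ j) p.2‖ ^ 2)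
        ≤ (Ω ×ˢ (Set.univ : Set (Fin n → ℝ))).indicator
            (fun q => c * ENNReal.ofReal (f q)) p := by
    intro p hp
    by_cases hx : p.1 ∈ Ω
    · have hmem : p ∈ Ω ×ˢ (Set.univ : Set (Fin n → ℝ)) := ⟨hx, trivial⟩
      rw [Set.indicator_of_mem hmem]
      rw [← Finset.mul_sum]
      have key : ∑ j, ENNReal.ofReal (‖φ j p.1‖ ^ 2 * ‖ft n (φ j) p.2‖ ^ 2) ≤ c := by
        have step1 : ∑ j, ENNReal.ofReal (‖φ j p.1‖ ^ 2 * ‖ft n (φ j) p.2‖ ^ 2)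
            ≤ ∑ j, ENNReal.ofReal (C * ‖ft n (φ j) p.2‖ ^ 2) := by
          refine Finset.sum_le_sum fun j _ => ENNReal.ofReal_le_ofReal ?_
          exact mul_le_mul_of_nonneg_right (hp j) (by positivity)
        have step2 : ∑ j, ENNReal.ofReal (C * ‖ft n (φ j) p.2‖ ^ 2)
            = ENNReal.ofReal C * ENNReal.ofReal (∑ j, ‖ft n (φ j) p.2‖ ^ 2) := by
          rw [← ENNReal.ofReal_sum_of_nonneg (fun j _ => by positivity),
            ← ENNReal.ofReal_mul hC.le, Finset.mul_sum]
        have step3 : ENNReal.ofReal (∑ j, ‖ft n (φ j) p.2‖ ^ 2)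
            ≤ ENNReal.ofReal ((2 * π) ^ (-(n : ℝ)) * (volume Ω).toReal) :=
          ENNReal.ofReal_le_ofReal (hbessel p.2)
        calc ∑ j, ENNReal.ofReal (‖φ j p.1‖ ^ 2 * ‖ft n (φ j) p.2‖ ^ 2)
            ≤ ENNReal.ofReal C * ENNReal.ofReal (∑ j, ‖ft n (φ j) p.2‖ ^ 2) := by
              rw [← step2]; exact step1
          _ ≤ ENNReal.ofReal C * ENNReal.ofReal ((2 * π) ^ (-(n : ℝ)) * (volume Ω).toReal) :=
              mul_le_mul_right step3 _
          _ = c := by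
              rw [ENNReal.ofReal_mul (by positivity), ENNReal.ofReal_toReal hΩfin, hc]
              ring
      calc ENNReal.ofReal (f p) * ∑ j, ENNReal.ofReal (‖φ j p.1‖ ^ 2 * ‖ft n (φ j) p.2‖ ^ 2)
          ≤ ENNReal.ofReal (f p) * c := mul_le_mul_right key _
        _ = c * ENNReal.ofReal (f p) := mul_comm _ _
    · have hz : ∀ j, φ j p.1 = 0 := fun j =>
        Function.notMem_support.mp (fun h => hx (hsupp j h))
      have : ∀ j : Fin N, ENNReal.ofReal (f p) *
          ENNReal.ofReal (‖φ j p.1‖ ^ 2 * ‖ft n (φ j) p.2‖ ^ 2) = 0 := by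
        intro j; rw [hz j]; simp
      rw [Finset.sum_congr rfl fun j _ => this j]
      simp
  -- put everything together
  calc ∑ j, ∫⁻ p : (Fin n → ℝ) × (Fin n → ℝ),
        ENNReal.ofReal (f p) * ENNReal.ofReal (‖φ j p.1‖ ^ 2 * ‖ft n (φ j) p.2‖ ^ 2)
      ≤ ∫⁻ p : (Fin n → ℝ) × (Fin n → ℝ), ∑ j,
          ENNReal.ofReal (f p) * ENNReal.ofReal (‖φ j p.1‖ ^ 2 * ‖ft n (φ j) p.2‖ ^ 2) :=
        sum_lintegral_le _ _ _
    _ ≤ ∫⁻ p : (Fin n → ℝ) × (Fin n → ℝ), (Ω ×ˢ (Set.univ : Set (Fin n → ℝ))).indicator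
          (fun q => c * ENNReal.ofReal (f q)) p := by
        refine lintegral_mono_ae ?_
        filter_upwards [hae] with p hp
        exact hpt p hp
    _ = ∫⁻ p in Ω ×ˢ (Set.univ : Set (Fin n → ℝ)), c * ENNReal.ofReal (f p) := by
        rw [lintegral_indicator (hΩm.prod MeasurableSet.univ)]
    _ = c * ∫⁻ p in Ω ×ˢ (Set.univ : Set (Fin n → ℝ)), ENNReal.ofReal (f p) := by
        rw [lintegral_const_mul _ hf.ennreal_ofReal]
end

section
/- Let P_m be a homogeneous harmonic polynomial of degree m on ℝⁿ. Then the Fourier transform of x ↦ P_m(x) e^{−|x|²/2} equals k ↦ (−i)^m P_m(k) e^{−|k|²/2}. -/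
open MeasureTheory Real Set

section HeckeAux

open Complex

noncomputable def hk1 (a : ℕ) (κ : ℝ) : ℝ → ℂ :=
  fun x => (x:ℂ)^a * Complex.exp (-(Complex.I * κ * x) - (x:ℂ)^2/2)

noncomputable def hkD (a : ℕ) (κ : ℝ) : ℂ := ∫ x : ℝ, hk1 a κ x

lemma hk_bound_integrable (a : ℕ) :
    Integrable (fun x : ℝ => |x| ^ a * Real.exp (-(1/2) * x^2)) := by
  have h0 : Integrable (fun x : ℝ => x ^ (a:ℝ) * Real.exp (-(1/2) * x^2)) :=
    integrable_rpow_mul_exp_neg_mul_sq (by norm_num)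
      (lt_of_lt_of_le neg_one_lt_zero (Nat.cast_nonneg a))
  have := h0.abs
  refine this.congr ?_
  filter_upwards with x
  rw [abs_mul, Real.rpow_natCast, _root_.abs_pow, abs_of_pos (Real.exp_pos _)]

lemma hk1_norm (a : ℕ) (κ : ℝ) (x : ℝ) :
    ‖hk1 a κ x‖ = |x| ^ a * Real.exp (-(1/2) * x^2) := by
  unfold hk1
  rw [norm_mul, Complex.norm_exp, norm_pow, Complex.norm_real, Real.norm_eq_abs]
  congr 1
  congr 1
  simp [Complex.sub_re, Complex.div_re, Complex.normSq, Complex.sq_norm,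
    ← Complex.ofReal_pow]
  ring

lemma hk1_integrable (a : ℕ) (κ : ℝ) : Integrable (hk1 a κ) := by
  refine (hk_bound_integrable a).mono' ?_ ?_
  · apply Continuous.aestronglyMeasurable
    unfold hk1; fun_prop
  · filter_upwards with x
    rw [hk1_norm]

lemma hkD_zero (κ : ℝ) :
    hkD 0 κ = (2*π:ℂ) ^ (1/2 : ℂ) * Complex.exp (-(κ:ℂ)^2/2) := by
  have h := fourierIntegral_gaussian (b := (1/2 : ℂ)) (by norm_num) (-(κ:ℂ))
  unfold hkD hk1
  calc ∫ x : ℝ, (x:ℂ)^0 * Complex.exp (-(Complex.I * κ * x) - (x:ℂ)^2/2)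
      = ∫ x : ℝ, Complex.exp (Complex.I * -(κ:ℂ) * x) * Complex.exp (-(1/2:ℂ) * (x:ℂ)^2) := by
        congr 1; ext x
        rw [pow_zero, one_mul, ← Complex.exp_add]
        congr 1; ring
    _ = ((π:ℂ) / (1/2)) ^ (1/2 : ℂ) * Complex.exp (-(-(κ:ℂ))^2 / (4 * (1/2))) := h
    _ = (2*π:ℂ) ^ (1/2 : ℂ) * Complex.exp (-(κ:ℂ)^2/2) := by
        congr 2
        · ring
        · ring

lemma hkD_rec (a : ℕ) (κ : ℝ) :
    (a:ℂ) * hkD (a-1) κ = hkD (a+1) κ + Complex.I * κ * hkD a κ := by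
  set u' : ℝ → ℂ := fun x =>
    ((a:ℂ) * hk1 (a-1) κ x - Complex.I * κ * hk1 a κ x) - hk1 (a+1) κ x with hu'
  have hder : ∀ x : ℝ, HasDerivAt (hk1 a κ) (u' x) x := by
    intro x
    have hinner : HasDerivAt (fun z : ℂ => -(Complex.I*κ*z) - z^2/2)
        (-(Complex.I*(κ:ℂ)) - (x:ℂ)) (x:ℂ) := by
      have h1 := (((hasDerivAt_id ((x:ℂ))).const_mul (Complex.I*(κ:ℂ))).neg).sub
        ((hasDerivAt_pow 2 ((x:ℂ))).div_const 2)
      refine h1.congr_deriv ?_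
      simp
    have hexp := hinner.cexp
    have hpow : HasDerivAt (fun z : ℂ => z^a) ((a:ℂ) * (x:ℂ)^(a-1)) (x:ℂ) :=
      hasDerivAt_pow a _
    have hmul := (hpow.mul hexp).comp_ofReal
    have heq : u' x = (a:ℂ) * (x:ℂ)^(a-1) * Complex.exp (-(Complex.I*κ*(x:ℂ)) - (x:ℂ)^2/2)
        + (x:ℂ)^a * (Complex.exp (-(Complex.I*κ*(x:ℂ)) - (x:ℂ)^2/2) * (-(Complex.I*(κ:ℂ)) - (x:ℂ))) := by
      rw [hu']
      unfold hk1
      rw [pow_succ]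
      ring
    rw [heq]
    exact hmul
  have hint : Integrable u' :=
    (((hk1_integrable (a-1) κ).const_mul _).sub
      ((hk1_integrable a κ).const_mul _)).sub (hk1_integrable (a+1) κ)
  have h0 : ∫ x : ℝ, u' x = 0 :=
    integral_eq_zero_of_hasDerivAt_of_integrable hder hint (hk1_integrable a κ)
  rw [hu'] at h0
  beta_reduce at h0
  have hA : Integrable (fun x : ℝ => (a:ℂ) * hk1 (a-1) κ x) :=
    (hk1_integrable _ _).const_mul _
  have hB : Integrable (fun x : ℝ => Complex.I * κ * hk1 a κ x) :=
    (hk1_integrable _ _).const_mul _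
  have hAB : Integrable
      (fun x : ℝ => (a:ℂ) * hk1 (a-1) κ x - Complex.I * κ * hk1 a κ x) := hA.sub hB
  rw [integral_sub hAB (hk1_integrable (a+1) κ), integral_sub hA hB,
    MeasureTheory.integral_const_mul, MeasureTheory.integral_const_mul] at h0
  unfold hkD
  linear_combination h0

open MvPolynomial in
lemma pderiv_comm' {n : ℕ} (i j : Fin n) (Q : MvPolynomial (Fin n) ℝ) :
    pderiv i (pderiv j Q) = pderiv j (pderiv i Q) := by
  induction Q using MvPolynomial.induction_on' with
  | monomial v c =>
    simp only [pderiv_monomial]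
    rcases eq_or_ne i j with rfl | hij
    · rfl
    · congr 1
      · rw [tsub_tsub, tsub_tsub, add_comm]
      · rw [Finsupp.tsub_apply, Finsupp.tsub_apply,
          Finsupp.single_apply, if_neg (Ne.symm hij), Finsupp.single_apply, if_neg hij]
        simp only [tsub_zero]
        ring
  | add p q hp hq => simp [map_add, hp, hq]

lemma degree_eq_sum_univ {n : ℕ} (d : Fin n →₀ ℕ) : d.degree = ∑ i, d i :=
  Finset.sum_subset (Finset.subset_univ _)
    (fun i _ hi => Finsupp.notMem_support_iff.mp hi)

open MvPolynomial in
lemma isHomogeneous_pderiv {n m : ℕ} {P : MvPolynomial (Fin n) ℝ}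
    (hP : P.IsHomogeneous (m+1)) (j : Fin n) : (pderiv j P).IsHomogeneous m := by
  conv_lhs => rw [P.as_sum]
  rw [map_sum]
  apply MvPolynomial.IsHomogeneous.sum
  intro v hv
  rw [pderiv_monomial]
  rcases Nat.eq_zero_or_pos (v j) with h0 | h0
  · rw [h0]
    norm_num
    exact MvPolynomial.isHomogeneous_zero _ _ _
  · apply isHomogeneous_monomial
    have hdeg : v.degree = m + 1 := by
      rw [Finsupp.degree_eq_weight_one]; exact hP (MvPolynomial.mem_support_iff.mp hv)
    rw [degree_eq_sum_univ] at hdeg ⊢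
    rw [← Finset.add_sum_erase _ _ (Finset.mem_univ j)] at hdeg ⊢
    have he : ∑ i ∈ Finset.univ.erase j, (v - Finsupp.single j 1 : Fin n →₀ ℕ) i
        = ∑ i ∈ Finset.univ.erase j, v i := by
      apply Finset.sum_congr rfl
      intro i hi
      rw [Finsupp.tsub_apply, Finsupp.single_apply,
        if_neg (Finset.ne_of_mem_erase hi).symm, tsub_zero]
    rw [he, Finsupp.tsub_apply, Finsupp.single_apply, if_pos rfl]
    omega

open MvPolynomial in
lemma euler_identity {n m : ℕ} {P : MvPolynomial (Fin n) ℝ} (hP : P.IsHomogeneous m) :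
    ∑ j : Fin n, X j * pderiv j P = m • P := by
  conv_lhs => rw [P.as_sum]
  conv_rhs => rw [P.as_sum]
  rw [Finset.smul_sum]
  simp only [map_sum, Finset.mul_sum]
  rw [Finset.sum_comm]
  apply Finset.sum_congr rfl
  intro v hv
  have hdeg : ∑ i, v i = m := by
    rw [← degree_eq_sum_univ, Finsupp.degree_eq_weight_one]
    exact hP (MvPolynomial.mem_support_iff.mp hv)
  have step : ∀ j : Fin n, X j * pderiv j (monomial v (coeff v P))
      = v j • monomial v (coeff v P) := by
    intro j
    rw [pderiv_monomial]
    rcases Nat.eq_zero_or_pos (v j) with h0 | h0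
    · rw [h0]; simp
    · have hle : Finsupp.single j 1 ≤ v := by
        rw [Finsupp.single_le_iff]; omega
      rw [show (X j : MvPolynomial (Fin n) ℝ) = monomial (Finsupp.single j 1) 1 by
          rw [← pow_one (X j), X_pow_eq_monomial], monomial_mul,
        add_tsub_cancel_of_le hle, smul_monomial]
      congr 1
      simp [mul_comm]
  rw [Finset.sum_congr rfl (fun j _ => step j), ← Finset.sum_smul, hdeg]

noncomputable def hkE {n : ℕ} (k : Fin n → ℝ) : (Fin n → ℝ) → ℂ :=
  fun x => Complex.exp (-(Complex.I * ((∑ j, k j * x j : ℝ):ℂ)) - ((∑ j, (x j)^2 : ℝ):ℂ)/2)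

lemma hkE_eq {n : ℕ} (k : Fin n → ℝ) (x : Fin n → ℝ) :
    hkE k x = ∏ j, Complex.exp (-(Complex.I * (k j) * (x j)) - ((x j):ℂ)^2/2) := by
  unfold hkE
  rw [← Complex.exp_sum]
  congr 1
  rw [Finset.sum_sub_distrib, Finset.sum_neg_distrib, ← Finset.sum_div]
  push_cast [Finset.mul_sum]
  congr 1
  congr 1
  apply Finset.sum_congr rfl
  intro i _
  ring

open MvPolynomial in
lemma integrand_monomial {n : ℕ} (k : Fin n → ℝ) (v : Fin n →₀ ℕ) (c : ℝ) (x : Fin n → ℝ) :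
    ((eval x (monomial v c) : ℝ) : ℂ) * hkE k x
      = (c:ℂ) * ∏ j, hk1 (v j) (k j) (x j) := by
  rw [eval_monomial, hkE_eq]
  unfold hk1
  rw [Finsupp.prod_fintype _ _ (fun i => pow_zero _), Complex.ofReal_mul,
    Complex.ofReal_prod]
  simp only [Complex.ofReal_pow]
  rw [mul_assoc, ← Finset.prod_mul_distrib]

noncomputable def hkL {n : ℕ} (k : Fin n → ℝ) (Q : MvPolynomial (Fin n) ℝ) : ℂ :=
  ∫ x : Fin n → ℝ, ((MvPolynomial.eval x Q : ℝ) : ℂ) * hkE k x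

open MvPolynomial in
lemma integrand_eq {n : ℕ} (k : Fin n → ℝ) (Q : MvPolynomial (Fin n) ℝ) (x : Fin n → ℝ) :
    ((eval x Q : ℝ) : ℂ) * hkE k x
      = ∑ v ∈ Q.support, ((coeff v Q : ℝ) : ℂ) * ∏ j, hk1 (v j) (k j) (x j) := by
  conv_lhs => rw [Q.as_sum]
  rw [map_sum]
  push_cast
  rw [Finset.sum_mul]
  apply Finset.sum_congr rfl
  intro v _
  exact integrand_monomial k v (coeff v Q) x

open MvPolynomial in
lemma hkL_integrable {n : ℕ} (k : Fin n → ℝ) (Q : MvPolynomial (Fin n) ℝ) :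
    Integrable (fun x : Fin n → ℝ => ((eval x Q : ℝ) : ℂ) * hkE k x) := by
  have : (fun x : Fin n → ℝ => ((eval x Q : ℝ) : ℂ) * hkE k x)
      = fun x => ∑ v ∈ Q.support, ((coeff v Q : ℝ) : ℂ) * ∏ j, hk1 (v j) (k j) (x j) := by
    funext x; exact integrand_eq k Q x
  rw [this]
  exact integrable_finset_sum _ fun v _ =>
    (Integrable.fintype_prod (fun j => hk1_integrable (v j) (k j))).const_mul _

open MvPolynomial in
lemma hkL_monomial {n : ℕ} (k : Fin n → ℝ) (v : Fin n →₀ ℕ) (c : ℝ) :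
    hkL k (monomial v c) = (c:ℂ) * ∏ j, hkD (v j) (k j) := by
  unfold hkL
  rw [show (fun x : Fin n → ℝ => ((eval x (monomial v c) : ℝ) : ℂ) * hkE k x)
      = fun x => (c:ℂ) * ∏ j, hk1 (v j) (k j) (x j) from funext (integrand_monomial k v c),
    MeasureTheory.integral_const_mul, MeasureTheory.integral_fintype_prod_volume_eq_prod]
  rfl

open MvPolynomial in
lemma hkL_add {n : ℕ} (k : Fin n → ℝ) (Q₁ Q₂ : MvPolynomial (Fin n) ℝ) :
    hkL k (Q₁ + Q₂) = hkL k Q₁ + hkL k Q₂ := by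
  unfold hkL
  rw [← MeasureTheory.integral_add (hkL_integrable k Q₁) (hkL_integrable k Q₂)]
  congr 1
  funext x
  rw [map_add]
  push_cast
  ring

lemma hkL_zero {n : ℕ} (k : Fin n → ℝ) : hkL k 0 = 0 := by
  unfold hkL; simp

open MvPolynomial in
lemma hkL_sum {n : ℕ} (k : Fin n → ℝ) {ι : Type*} (s : Finset ι)
    (f : ι → MvPolynomial (Fin n) ℝ) :
    hkL k (∑ i ∈ s, f i) = ∑ i ∈ s, hkL k (f i) := by
  induction s using Finset.cons_induction_on with
  | empty => simpa using hkL_zero k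
  | cons _ _ hi ih =>
    rw [Finset.sum_cons, Finset.sum_cons, hkL_add, ih]

open MvPolynomial in
lemma hkL_nsmul {n : ℕ} (k : Fin n → ℝ) (c : ℕ) (Q : MvPolynomial (Fin n) ℝ) :
    hkL k (c • Q) = (c:ℂ) * hkL k Q := by
  unfold hkL
  rw [← MeasureTheory.integral_const_mul]
  congr 1
  funext x
  rw [show (eval x) (c • Q) = c • eval x Q from map_nsmul (eval x) c Q]
  push_cast
  ring

open MvPolynomial in
lemma hkL_rel_monomial {n : ℕ} (k : Fin n → ℝ) (j : Fin n) (v : Fin n →₀ ℕ) (c : ℝ) :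
    hkL k (pderiv j (monomial v c))
      = hkL k (X j * monomial v c) + Complex.I * (k j) * hkL k (monomial v c) := by
  have hX : (X j : MvPolynomial (Fin n) ℝ) * monomial v c
      = monomial (v + Finsupp.single j 1) c := by
    rw [show (X j : MvPolynomial (Fin n) ℝ) = monomial (Finsupp.single j 1) 1 by
        rw [← pow_one (X j), X_pow_eq_monomial], monomial_mul, one_mul, add_comm]
  rw [pderiv_monomial, hX, hkL_monomial, hkL_monomial, hkL_monomial]
  have hsub : ∏ i ∈ Finset.univ.erase j, hkD ((v - Finsupp.single j 1 : Fin n →₀ ℕ) i) (k i)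
      = ∏ i ∈ Finset.univ.erase j, hkD (v i) (k i) := by
    apply Finset.prod_congr rfl
    intro i hi
    rw [Finsupp.tsub_apply, Finsupp.single_apply, if_neg (Finset.ne_of_mem_erase hi).symm,
      tsub_zero]
  have hadd : ∏ i ∈ Finset.univ.erase j, hkD ((v + Finsupp.single j 1 : Fin n →₀ ℕ) i) (k i)
      = ∏ i ∈ Finset.univ.erase j, hkD (v i) (k i) := by
    apply Finset.prod_congr rfl
    intro i hi
    rw [Finsupp.add_apply, Finsupp.single_apply, if_neg (Finset.ne_of_mem_erase hi).symm,
      add_zero]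
  have e1 : ∏ i, hkD ((v - Finsupp.single j 1 : Fin n →₀ ℕ) i) (k i)
      = hkD (v j - 1) (k j) * ∏ i ∈ Finset.univ.erase j, hkD (v i) (k i) := by
    rw [← Finset.mul_prod_erase _ _ (Finset.mem_univ j), hsub,
      Finsupp.tsub_apply, Finsupp.single_apply, if_pos rfl]
  have e2 : ∏ i, hkD ((v + Finsupp.single j 1 : Fin n →₀ ℕ) i) (k i)
      = hkD (v j + 1) (k j) * ∏ i ∈ Finset.univ.erase j, hkD (v i) (k i) := by
    rw [← Finset.mul_prod_erase _ _ (Finset.mem_univ j), hadd,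
      Finsupp.add_apply, Finsupp.single_apply, if_pos rfl]
  have e3 : ∏ i, hkD (v i) (k i)
      = hkD (v j) (k j) * ∏ i ∈ Finset.univ.erase j, hkD (v i) (k i) :=
    (Finset.mul_prod_erase _ _ (Finset.mem_univ j)).symm
  rw [e1, e2, e3]
  have hrec := hkD_rec (v j) (k j)
  push_cast
  linear_combination (c : ℂ) * (∏ i ∈ Finset.univ.erase j, hkD (v i) (k i)) * hrec

open MvPolynomial in
lemma hkL_rel {n : ℕ} (k : Fin n → ℝ) (j : Fin n) (Q : MvPolynomial (Fin n) ℝ) :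
    hkL k (pderiv j Q) = hkL k (X j * Q) + Complex.I * (k j) * hkL k Q := by
  conv_lhs => rw [Q.as_sum]
  conv_rhs => rw [Q.as_sum]
  rw [map_sum, hkL_sum, Finset.mul_sum, hkL_sum, hkL_sum, Finset.mul_sum, ← Finset.sum_add_distrib]
  apply Finset.sum_congr rfl
  intro v _
  exact hkL_rel_monomial k j v (coeff v Q)

open MvPolynomial in
lemma hkL_main {n : ℕ} (k : Fin n → ℝ) (m : ℕ) :
    ∀ P : MvPolynomial (Fin n) ℝ, P.IsHomogeneous m →
      (∑ j, pderiv j (pderiv j P)) = 0 →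
      hkL k P = (∏ j, hkD 0 (k j)) * (aeval (fun j => -(Complex.I * (k j))) P) := by
  induction m with
  | zero =>
    intro P hP _
    obtain ⟨c, rfl⟩ : ∃ c, P = C c := by
      refine ⟨coeff 0 P, ?_⟩
      ext v
      rcases eq_or_ne v 0 with rfl | hv
      · simp
      · rw [hP.coeff_eq_zero (fun h => hv ((Finsupp.degree_eq_zero_iff v).mp h)),
          coeff_C, if_neg (Ne.symm hv)]
    conv_lhs => rw [C_apply]
    rw [hkL_monomial, aeval_C, Complex.coe_algebraMap]
    simp only [Finsupp.coe_zero, Pi.zero_apply]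
    ring
  | succ m ih =>
    intro P hP hharm
    have hEuler := euler_identity hP
    have hsmul : hkL k ((m+1) • P) = ((m:ℂ)+1) * hkL k P := by
      rw [hkL_nsmul]; push_cast; ring
    have hL1 : ((m:ℂ)+1) * hkL k P = ∑ j, hkL k (X j * pderiv j P) := by
      rw [← hsmul, ← hEuler, hkL_sum]
    have hrel : ∀ j, hkL k (X j * pderiv j P)
        = hkL k (pderiv j (pderiv j P)) - Complex.I * (k j) * hkL k (pderiv j P) := by
      intro j
      have := hkL_rel k j (pderiv j P)
      linear_combination -this
    have hsum0 : ∑ j, hkL k (pderiv j (pderiv j P)) = 0 := by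
      rw [← hkL_sum, hharm, hkL_zero]
    have hharm' : ∀ j : Fin n, (∑ i, pderiv i (pderiv i (pderiv j P))) = 0 := by
      intro j
      have : ∀ i : Fin n, pderiv i (pderiv i (pderiv j P))
          = pderiv j (pderiv i (pderiv i P)) := by
        intro i
        rw [pderiv_comm' i j P, pderiv_comm' i j (pderiv i P)]
      rw [Finset.sum_congr rfl (fun i _ => this i), ← map_sum, hharm, map_zero]
    have hih : ∀ j, hkL k (pderiv j P)
        = (∏ i, hkD 0 (k i)) * (aeval (fun i => -(Complex.I * (k i))) (pderiv j P)) :=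
      fun j => ih (pderiv j P) (isHomogeneous_pderiv hP j) (hharm' j)
    -- Euler evaluated at the point  c = fun j => -(I k j)
    have hEval : ∑ j, (-(Complex.I * (k j))) * (aeval (fun i => -(Complex.I * (k i))) (pderiv j P))
        = ((m:ℂ)+1) * aeval (fun i => -(Complex.I * (k i))) P := by
      have := congrArg (aeval (fun i => -(Complex.I * (k i))) :
        MvPolynomial (Fin n) ℝ →ₐ[ℝ] ℂ) hEuler
      rw [map_sum] at this
      simp only [map_mul, aeval_X] at this
      rw [this]
      rw [map_nsmul]
      push_cast
      ring
    have : ((m:ℂ)+1) * hkL k P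
        = ((m:ℂ)+1) * ((∏ i, hkD 0 (k i)) * (aeval (fun i => -(Complex.I * (k i))) P)) := by
      rw [hL1, Finset.sum_congr rfl (fun j _ => hrel j)]
      rw [Finset.sum_sub_distrib, hsum0, zero_sub]
      rw [Finset.sum_congr rfl (fun j _ => by rw [hih j] : ∀ j ∈ Finset.univ,
        Complex.I * (k j) * hkL k (pderiv j P)
          = Complex.I * (k j) * ((∏ i, hkD 0 (k i)) * (aeval (fun i => -(Complex.I * (k i))) (pderiv j P))))]
      have hfin : -∑ j, Complex.I * (k j)
            * ((∏ i, hkD 0 (k i)) * (aeval (fun i => -(Complex.I * (k i))) (pderiv j P)))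
          = (∏ i, hkD 0 (k i)) * ∑ j, (-(Complex.I * (k j)))
            * (aeval (fun i => -(Complex.I * (k i))) (pderiv j P)) := by
        rw [Finset.mul_sum, ← Finset.sum_neg_distrib]
        apply Finset.sum_congr rfl
        intro j _
        ring
      rw [hfin, hEval]
      ring
    have hm : ((m:ℂ)+1) ≠ 0 := by exact_mod_cast Nat.succ_ne_zero m
    exact mul_left_cancel₀ hm this

open MvPolynomial in
lemma aeval_neg_I_smul {n m : ℕ} (k : Fin n → ℝ) {P : MvPolynomial (Fin n) ℝ}
    (hP : P.IsHomogeneous m) :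
    (aeval (fun j => -(Complex.I * (k j))) P)
      = (-Complex.I)^m * ((eval k P : ℝ) : ℂ) := by
  conv_lhs => rw [P.as_sum]
  conv_rhs => rw [P.as_sum]
  rw [map_sum, map_sum]
  push_cast
  rw [Finset.mul_sum]
  apply Finset.sum_congr rfl
  intro v hv
  have hdeg : ∑ i, v i = m := by
    rw [← degree_eq_sum_univ, Finsupp.degree_eq_weight_one]
    exact hP (MvPolynomial.mem_support_iff.mp hv)
  rw [aeval_monomial, eval_monomial, Finsupp.prod_fintype _ _ (fun i => pow_zero _),
    Finsupp.prod_fintype _ _ (fun i => pow_zero _)]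
  have : ∏ j, (-(Complex.I * (k j)))^(v j)
      = (-Complex.I)^m * ∏ j, ((k j : ℂ))^(v j) := by
    have h1 : ∀ j : Fin n, (-(Complex.I * (k j)))^(v j)
        = (-Complex.I)^(v j) * ((k j : ℂ))^(v j) := by
      intro j
      rw [← mul_pow]
      congr 1
      ring
    rw [Finset.prod_congr rfl (fun j _ => h1 j), Finset.prod_mul_distrib,
      Finset.prod_pow_eq_pow_sum, hdeg]
  rw [this, Complex.coe_algebraMap]
  push_cast
  ring

lemma prod_hkD_zero {n : ℕ} (k : Fin n → ℝ) :
    ∏ j, hkD 0 (k j)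
      = ((2*π:ℂ) ^ (1/2 : ℂ))^n * Complex.exp (-(((∑ j, (k j)^2 : ℝ)):ℂ)/2) := by
  rw [Finset.prod_congr rfl (fun j _ => hkD_zero (k j)), Finset.prod_mul_distrib,
    Finset.prod_const, ← Complex.exp_sum, Finset.card_univ, Fintype.card_fin]
  congr 1
  push_cast
  rw [← Finset.sum_div, ← Finset.sum_neg_distrib]

lemma scal_aux (n : ℕ) :
    (((2 * π : ℝ) ^ (-(n : ℝ) / 2) : ℝ) : ℂ) * ((2*π:ℂ) ^ (1/2 : ℂ))^n = 1 := by
  have h2π : (0:ℝ) ≤ 2 * π := by positivity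
  have h1 : ((2*π:ℂ)) ^ (1/2 : ℂ) = (((2*π:ℝ) ^ ((1/2 : ℝ)) : ℝ) : ℂ) := by
    rw [Complex.ofReal_cpow h2π]
    norm_num
  rw [h1, ← Complex.ofReal_pow, ← Complex.ofReal_mul]
  rw [← Real.rpow_natCast ((2*π:ℝ) ^ ((1/2:ℝ))) n, ← Real.rpow_mul h2π,
    ← Real.rpow_add (by positivity)]
  rw [show -(n:ℝ) / 2 + 1 / 2 * (n:ℝ) = 0 by ring, Real.rpow_zero]
  norm_num

end HeckeAux

/-- Hecke's identity: if `P` is a homogeneous harmonic polynomial of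
degree `m` on `ℝⁿ`, then the Fourier transform of `x ↦ P(x) e^{−|x|²/2}` is
`k ↦ (−i)^m P(k) e^{−|k|²/2}`. -/
theorem stmt_19 (n m : ℕ) (P : MvPolynomial (Fin n) ℝ)
    (hhom : P.IsHomogeneous m)
    (hharm : (∑ j, MvPolynomial.pderiv j (MvPolynomial.pderiv j P)) = 0) :
    ∀ k : Fin n → ℝ,
      ft n (fun x => ((MvPolynomial.eval x P : ℝ) : ℂ) *
          Complex.exp (-(((∑ j, (x j) ^ 2 : ℝ) : ℂ)) / 2)) k
        = (-Complex.I) ^ m * ((MvPolynomial.eval k P : ℝ) : ℂ) *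
          Complex.exp (-(((∑ j, (k j) ^ 2 : ℝ) : ℂ)) / 2) := by
  intro k
  have hint : (∫ x : Fin n → ℝ,
      (((MvPolynomial.eval x P : ℝ) : ℂ) *
        Complex.exp (-(((∑ j, (x j) ^ 2 : ℝ) : ℂ)) / 2)) *
        Complex.exp (-Complex.I * ((∑ j, k j * x j : ℝ) : ℂ)))
      = hkL k P := by
    unfold hkL hkE
    congr 1
    funext x
    rw [mul_assoc, ← Complex.exp_add]
    congr 2
    ring
  unfold ft
  rw [hint, hkL_main k m P hhom hharm, prod_hkD_zero, aeval_neg_I_smul k hhom,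
    Complex.real_smul]
  have hc := scal_aux n
  linear_combination (Complex.exp (-(((∑ j, (k j)^2 : ℝ)):ℂ)/2)
    * ((-Complex.I)^m * ((MvPolynomial.eval k P : ℝ):ℂ))) * hc
end
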